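/- Let n ∈ ℕ, L > 0, γ > 0, let J be a real n×n matrix and D a real n×n matrix, set H₁ = J − (γπ²/L²) D, and suppose s ∈ ℂ^n and θ ∈ ℝ satisfy H₁ s = iθ s. Define the real-valued function u(x,t) = 2 Re(e^{iθt} s) cos(πx/L) ∈ ℝ^n. Then u solves ∂_t u = J u + γ D ∂_x² u on [0,L] × ℝ with Neumann boundary conditions ∂_x u(0,t) = ∂_x u(L,t) = 0, and for each component A with polar decomposition s_A = |s_A| e^{iν_A}, one has u_A(x,t) = 2 |s_A| cos(ν_A + θ t) cos(πx/L). -/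

import Mathlib

open Matrix Real Set

/-- If `H₁ = J − (γπ²/L²) D` has a purely imaginary eigenvalue `iθ` with eigenvector `s`,
then `u(x,t) = 2 Re(e^{iθt} s) cos(πx/L)` is a real oscillatory solution of the linearized
system `∂_t u = J u + γ D ∂_x² u` with Neumann boundary conditions, and each component
satisfies `u_A(x,t) = 2|s_A| cos(ν_A + θt) cos(πx/L)` where `s_A = |s_A| e^{iν_A}`. -/
theorem oscillatory_mode_of_imaginary_eigenvalue
    (n : ℕ) (L γ : ℝ) (hL : 0 < L) (hγ : 0 < γ)
    (J D H₁ : Matrix (Fin n) (Fin n) ℝ)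
    (hH₁ : H₁ = J - (γ * π^2 / L^2) • D)
    (s : Fin n → ℂ) (θ : ℝ)
    (hs : (H₁.map (Complex.ofReal)).mulVec s = ((θ : ℂ) * Complex.I) • s)
    (ν : Fin n → ℝ)
    (hν : ∀ A : Fin n, s A = (‖s A‖ : ℂ) * Complex.exp ((ν A : ℂ) * Complex.I))
    (u : ℝ → ℝ → (Fin n → ℝ))
    (hu : ∀ (x t : ℝ) (A : Fin n),
      u x t A = 2 * (Complex.exp (((θ * t : ℝ) : ℂ) * Complex.I) * s A).re
        * Real.cos (π * x / L)) :
    (∀ x ∈ Icc (0:ℝ) L, ∀ t : ℝ,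
        deriv (fun τ => u x τ) t
          = J.mulVec (u x t) + γ • D.mulVec (deriv (fun y => deriv (fun z => u z t) y) x))
      ∧ (∀ t : ℝ, deriv (fun y => u y t) 0 = 0)
      ∧ (∀ t : ℝ, deriv (fun y => u y t) L = 0)
      ∧ (∀ (x t : ℝ) (A : Fin n),
          u x t A = 2 * ‖s A‖ * Real.cos (ν A + θ * t) * Real.cos (π * x / L)) := by
  have hL0 : L ≠ 0 := ne_of_gt hL
  -- rewrite the time factor in polar form
  have hexp : ∀ (t : ℝ) (A : Fin n),
      Complex.exp (((θ * t : ℝ) : ℂ) * Complex.I) * s A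
        = (‖s A‖ : ℂ) * Complex.exp (((ν A + θ * t : ℝ) : ℂ) * Complex.I) := by
    intro t A
    conv_lhs => rw [hν A]
    rw [← mul_assoc, mul_comm _ ((‖s A‖ : ℂ)), mul_assoc, ← Complex.exp_add]
    push_cast; ring_nf
  have hre : ∀ (t : ℝ) (A : Fin n),
      (Complex.exp (((θ * t : ℝ) : ℂ) * Complex.I) * s A).re
        = ‖s A‖ * Real.cos (ν A + θ * t) := by
    intro t A
    rw [hexp, Complex.re_ofReal_mul, Complex.exp_ofReal_mul_I_re]
  have hIm : ∀ (t : ℝ) (A : Fin n),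
      (Complex.I * (Complex.exp (((θ * t : ℝ) : ℂ) * Complex.I) * s A)).re
        = -(‖s A‖ * Real.sin (ν A + θ * t)) := by
    intro t A
    rw [hexp, Complex.mul_re, Complex.I_re, Complex.I_im, Complex.im_ofReal_mul,
      Complex.exp_ofReal_mul_I_im]
    ring
  -- component formula (fourth conjunct)
  have hu' : ∀ (x t : ℝ) (A : Fin n),
      u x t A = 2 * ‖s A‖ * Real.cos (ν A + θ * t) * Real.cos (π * x / L) := by
    intro x t A
    rw [hu, hre]; ring
  -- the real eigenvalue relation
  have heig : ∀ (t : ℝ) (A : Fin n),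
      ∑ B, H₁ A B * (2 * ‖s B‖ * Real.cos (ν B + θ * t))
        = -(2 * θ * ‖s A‖ * Real.sin (ν A + θ * t)) := by
    intro t A
    have h := congrFun hs A
    simp only [Matrix.mulVec, dotProduct, Matrix.map_apply, Pi.smul_apply,
      smul_eq_mul] at h
    -- h : ∑ B, ↑(H₁ A B) * s B = ↑θ * Complex.I * s A
    calc ∑ B, H₁ A B * (2 * ‖s B‖ * Real.cos (ν B + θ * t))
        = ∑ B, 2 * ((Complex.ofReal (H₁ A B))
            * (Complex.exp (((θ * t : ℝ) : ℂ) * Complex.I) * s B)).re := by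
          refine Finset.sum_congr rfl fun B _ => ?_
          rw [Complex.re_ofReal_mul, hre]; ring
      _ = 2 * (∑ B, (Complex.ofReal (H₁ A B))
            * (Complex.exp (((θ * t : ℝ) : ℂ) * Complex.I) * s B)).re := by
          rw [Complex.re_sum, Finset.mul_sum]
      _ = 2 * (Complex.exp (((θ * t : ℝ) : ℂ) * Complex.I)
            * ∑ B, (Complex.ofReal (H₁ A B)) * s B).re := by
          rw [Finset.mul_sum]
          congr 2
          refine Finset.sum_congr rfl fun B _ => ?_
          ring
      _ = 2 * θ * (Complex.I * (Complex.exp (((θ * t : ℝ) : ℂ) * Complex.I) * s A)).re := by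
          rw [h]
          rw [show Complex.exp (((θ * t : ℝ) : ℂ) * Complex.I) * ((θ:ℂ) * Complex.I * s A)
            = (θ:ℂ) * (Complex.I * (Complex.exp (((θ * t : ℝ) : ℂ) * Complex.I) * s A)) by ring,
            Complex.re_ofReal_mul]
          ring
      _ = -(2 * θ * ‖s A‖ * Real.sin (ν A + θ * t)) := by
          rw [hIm]; ring
  -- derivative helpers
  have harg : ∀ x : ℝ, HasDerivAt (fun y : ℝ => π * y / L) (π / L) x := by
    intro x
    simpa using ((hasDerivAt_id x).const_mul π).div_const L
  -- time derivative
  have hdt : ∀ (x t : ℝ), HasDerivAt (fun τ => u x τ)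
      (fun A => -(2 * θ * ‖s A‖ * Real.sin (ν A + θ * t)) * Real.cos (π * x / L)) t := by
    intro x t
    rw [hasDerivAt_pi]
    intro A
    have hfun : (fun τ => u x τ A)
        = fun τ => 2 * ‖s A‖ * Real.cos (ν A + θ * τ) * Real.cos (π * x / L) :=
      funext fun τ => hu' x τ A
    rw [hfun]
    have h1 : HasDerivAt (fun τ : ℝ => ν A + θ * τ) θ t := by
      simpa using ((hasDerivAt_id t).const_mul θ).const_add (ν A)
    have h2 := (h1.cos.const_mul (2 * ‖s A‖)).mul_const (Real.cos (π * x / L))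
    convert h2 using 1
    case e'_4 => rfl
    ring
  -- spatial derivative
  have hdx : ∀ (x t : ℝ), HasDerivAt (fun y => u y t)
      (fun A => 2 * ‖s A‖ * Real.cos (ν A + θ * t)
        * (-Real.sin (π * x / L) * (π / L))) x := by
    intro x t
    rw [hasDerivAt_pi]
    intro A
    have hfun : (fun y => u y t A)
        = fun y => 2 * ‖s A‖ * Real.cos (ν A + θ * t) * Real.cos (π * y / L) :=
      funext fun y => hu' y t A
    rw [hfun]
    have h2 := ((harg x).cos).const_mul (2 * ‖s A‖ * Real.cos (ν A + θ * t))
    convert h2 using 1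
  have hdx' : ∀ (t x : ℝ), deriv (fun y => u y t) x
      = fun A => 2 * ‖s A‖ * Real.cos (ν A + θ * t)
        * (-Real.sin (π * x / L) * (π / L)) :=
    fun t x => (hdx x t).deriv
  -- second spatial derivative
  have hdxx : ∀ (x t : ℝ), HasDerivAt (fun y => deriv (fun z => u z t) y)
      (fun A => 2 * ‖s A‖ * Real.cos (ν A + θ * t)
        * (-(Real.cos (π * x / L) * (π / L) * (π / L)))) x := by
    intro x t
    have hfun : (fun y => deriv (fun z => u z t) y)
        = fun y => (fun A => 2 * ‖s A‖ * Real.cos (ν A + θ * t)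
          * (-Real.sin (π * y / L) * (π / L))) :=
      funext fun y => hdx' t y
    rw [hfun, hasDerivAt_pi]
    intro A
    have h2 := (((harg x).sin.neg).mul_const (π / L)).const_mul
      (2 * ‖s A‖ * Real.cos (ν A + θ * t))
    convert h2 using 1
    case e'_8 => rfl
    case e'_4 => rfl
    ring
  refine ⟨?_, ?_, ?_, hu'⟩
  · intro x hx t
    rw [(hdt x t).deriv, (hdxx x t).deriv]
    funext A
    simp only [Pi.add_apply, Pi.smul_apply, Matrix.mulVec, dotProduct, smul_eq_mul]
    rw [show -(2 * θ * ‖s A‖ * Real.sin (ν A + θ * t)) * Real.cos (π * x / L)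
        = (∑ B, H₁ A B * (2 * ‖s B‖ * Real.cos (ν B + θ * t)))
          * Real.cos (π * x / L) by rw [heig]]
    rw [Finset.sum_mul, Finset.mul_sum, ← Finset.sum_add_distrib]
    refine Finset.sum_congr rfl fun B _ => ?_
    rw [hu', show H₁ A B = J A B - γ * π^2 / L^2 * D A B by
      rw [hH₁]; simp [Matrix.sub_apply]]
    field_simp
    ring
  · intro t
    rw [hdx' t 0]
    funext A
    simp
  · intro t
    rw [hdx' t L]
    funext A
    rw [mul_div_assoc, div_self hL0, mul_one, Real.sin_pi]
    simp
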